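/- Let $h$ be an integer-valued function on the vertices of the $n$-dimensional hypercube $\{0,1\}^n$ such that along every edge (vertices differing in exactly one coordinate) the value of $h$ changes by exactly $1$ (increases or decreases by $1$), and suppose that for every face of dimension $2$ of the hypercube the restriction of $h$ does not attain its maximum at two distinct vertices of that square. If $h$ attains a minimum at the vertex $\underline{0} = (0,\dots,0)$, then for every vertex $e = (e_1,\dots,e_n)$ one has $h(e) = h(\underline{0}) + \sum_{i=1}^n e_i$. -/
import Mathlib


/-- The Claim in the proof of Proposition 2.4: an integer-valued function on the
vertices of the `n`-hypercube changing by exactly `1` along each edge, whose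
restriction to every 2-dimensional face does not attain its maximum at two
distinct vertices, and attaining a minimum at `0 = (0,…,0)`, satisfies
`h e = h 0 + ∑ i, e i`. -/
theorem stmt_0 (n : ℕ) (h : (Fin n → Bool) → ℤ)
    (hedge : ∀ u v : Fin n → Bool, (∃! i : Fin n, u i ≠ v i) →
      h u = h v + 1 ∨ h u = h v - 1)
    (hsq : ∀ (i j : Fin n), i ≠ j → ∀ v : Fin n → Bool,
      ¬ ∃ x y : Fin n → Bool,
        (∀ k, k ≠ i → k ≠ j → x k = v k) ∧ (∀ k, k ≠ i → k ≠ j → y k = v k) ∧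
        x ≠ y ∧
        (∀ z : Fin n → Bool, (∀ k, k ≠ i → k ≠ j → z k = v k) → h z ≤ h x) ∧
        (∀ z : Fin n → Bool, (∀ k, k ≠ i → k ≠ j → z k = v k) → h z ≤ h y))
    (hmin : ∀ e : Fin n → Bool, h (fun _ => false) ≤ h e) :
    ∀ e : Fin n → Bool,
      h e = h (fun _ => false) + ∑ i, (if e i then (1 : ℤ) else 0) := by
  have hwt : ∀ e : Fin n → Bool, (∑ i, (if e i then (1:ℤ) else 0))
      = ((Finset.univ.filter (fun i => e i = true)).card : ℤ) := by
    intro e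
    rw [Finset.sum_boole]
  have key : ∀ k : ℕ, ∀ e : Fin n → Bool,
      (Finset.univ.filter (fun i => e i = true)).card = k →
      h e = h (fun _ => false) + k := by
    intro k
    induction k using Nat.strong_induction_on with
    | _ k IH =>
      intro e hek
      rcases Nat.eq_zero_or_pos k with hk0 | hkpos
      · subst hk0
        have he0 : e = (fun _ => false) := by
          funext i
          have h1 := Finset.card_eq_zero.mp hek
          have hi : i ∉ Finset.univ.filter (fun i => e i = true) := by simp [h1]
          simpa using hi
        simp [he0]
      · obtain ⟨i, hi⟩ : ∃ i, e i = true := by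
          have hne : (Finset.univ.filter (fun i => e i = true)).Nonempty := by
            rw [← Finset.card_pos, hek]; exact hkpos
          obtain ⟨i, hi⟩ := hne
          exact ⟨i, (Finset.mem_filter.mp hi).2⟩
        obtain ⟨m, rfl⟩ : ∃ m, k = m + 1 := ⟨k - 1, (Nat.succ_pred_eq_of_pos hkpos).symm⟩
        set a := Function.update e i false with ha
        have hfila : Finset.univ.filter (fun k => a k = true)
            = (Finset.univ.filter (fun k => e k = true)).erase i := by
          ext k
          by_cases hk : k = i <;> simp [ha, Function.update_apply, hk]
        have hacard : (Finset.univ.filter (fun k => a k = true)).card = m := by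
          rw [hfila, Finset.card_erase_of_mem (by simp [hi]), hek]
          omega
        have hha : h a = h (fun _ => false) + m := IH m (by omega) a hacard
        have hedge_ea : h e = h a + 1 ∨ h e = h a - 1 := by
          apply hedge
          refine ⟨i, ?_, ?_⟩
          · simp [ha, hi]
          · intro j hj
            by_contra hji
            exact hj (by rw [ha, Function.update_of_ne hji])
        rcases hedge_ea with hcase | hcase
        · rw [hcase, hha]; push_cast; ring
        · -- bad case : h e = h a - 1
          exfalso
          have heval : h e = h (fun _ => false) + m - 1 := by rw [hcase, hha]
          rcases Nat.eq_zero_or_pos m with hm0 | hmpos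
          · subst hm0
            have := hmin e
            simp at heval
            linarith
          · obtain ⟨m', rfl⟩ : ∃ m', m = m' + 1 :=
              ⟨m - 1, (Nat.succ_pred_eq_of_pos hmpos).symm⟩
            obtain ⟨j, hja⟩ : ∃ j, a j = true := by
              have hne : (Finset.univ.filter (fun k => a k = true)).Nonempty := by
                rw [← Finset.card_pos, hacard]; omega
              obtain ⟨j, hj⟩ := hne
              exact ⟨j, (Finset.mem_filter.mp hj).2⟩
            have hji : j ≠ i := by
              intro hh; rw [hh] at hja; simp [ha] at hja
            have hje : e j = true := by
              rw [← hja]; simp [ha, Function.update_of_ne hji]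
            set b := Function.update e j false with hb
            set c := Function.update a j false with hc
            have hfilb : Finset.univ.filter (fun k => b k = true)
                = (Finset.univ.filter (fun k => e k = true)).erase j := by
              ext k
              by_cases hk : k = j <;> simp [hb, Function.update_apply, hk]
            have hbcard : (Finset.univ.filter (fun k => b k = true)).card = m' + 1 := by
              rw [hfilb, Finset.card_erase_of_mem (by simp [hje]), hek]
              omega
            have hfilc : Finset.univ.filter (fun k => c k = true)
                = (Finset.univ.filter (fun k => a k = true)).erase j := by
              ext k
              by_cases hk : k = j <;> simp [hc, Function.update_apply, hk]
            have hccard : (Finset.univ.filter (fun k => c k = true)).card = m' := by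
              rw [hfilc, Finset.card_erase_of_mem (by simp [hja]), hacard]
              omega
            have hhb : h b = h (fun _ => false) + (m' + 1) :=
              IH (m' + 1) (by omega) b hbcard
            have hhc : h c = h (fun _ => false) + m' := IH m' (by omega) c hccard
            have hbound : ∀ z : Fin n → Bool, (∀ k, k ≠ i → k ≠ j → z k = e k) →
                h z ≤ h (fun _ => false) + (m' + 1) := by
              intro z hz
              cases hzi : z i <;> cases hzj : z j
              · -- z = c
                have hzz : z = c := by
                  funext k
                  simp only [hc, ha, Function.update_apply]
                  rcases eq_or_ne k j with rfl | hkj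
                  · simp [hzj]
                  · rcases eq_or_ne k i with rfl | hki
                    · simp [hkj, hzi]
                    · simp [hkj, hki, hz k hki hkj]
                rw [hzz]
                push_cast at hhc ⊢
                linarith
              · -- z = a
                have hzz : z = a := by
                  funext k
                  simp only [ha, Function.update_apply]
                  rcases eq_or_ne k i with rfl | hki
                  · simp [hzi]
                  · rcases eq_or_ne k j with rfl | hkj
                    · simp [hki, hzj, hje]
                    · simp [hki, hz k hki hkj]
                rw [hzz]
                push_cast at hha ⊢
                linarith
              · -- z = b
                have hzz : z = b := by
                  funext k
                  simp only [hb, Function.update_apply]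
                  rcases eq_or_ne k j with rfl | hkj
                  · simp [hzj]
                  · rcases eq_or_ne k i with rfl | hki
                    · simp [hkj, hzi, hi]
                    · simp [hkj, hz k hki hkj]
                rw [hzz]
                push_cast at hhb ⊢
                linarith
              · -- z = e
                have hzz : z = e := by
                  funext k
                  rcases eq_or_ne k i with rfl | hki
                  · rw [hzi, hi]
                  · rcases eq_or_ne k j with rfl | hkj
                    · rw [hzj, hje]
                    · exact hz k hki hkj
                rw [hzz]
                push_cast at heval ⊢
                linarith
            apply hsq i j (fun hh => hji hh.symm) e
            refine ⟨a, b, ?_, ?_, ?_, ?_, ?_⟩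
            · intro k hki hkj; simp [ha, Function.update_of_ne hki]
            · intro k hki hkj; simp [hb, Function.update_of_ne hkj]
            · intro hab
              have := congrFun hab i
              rw [ha, hb] at this
              simp [Function.update_of_ne (Ne.symm hji)] at this
              simp [hi] at this
            · intro z hz
              calc h z ≤ h (fun _ => false) + (m' + 1) := hbound z hz
                _ = h a := by push_cast at hha ⊢; linarith
            · intro z hz
              calc h z ≤ h (fun _ => false) + (m' + 1) := hbound z hz
                _ = h b := by linarith [hhb]
  intro e
  rw [hwt e]
  exact key _ e rfl
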